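/- arXiv:1202.5530 — 2 statements merged into one kernel-verified Lean document; each statement's English description precedes it below -/
import Mathlib

section
/- Let W be a bounded complex of finite-dimensional vector spaces in degrees 0 through n, with w_i = dim W^i and h_i = dim H^i(W). Let r, s ∈ ℕ^{n+1} with s ≤ r componentwise, r ≤ w, s ≤ h. Then there exists a subcomplex L ⊆ W with dim L^i = r_i and dim H^i(L) = s_i for all i if and only if 0 ≤ χ_i(r-s) ≤ χ_i(w-h) for all 0 ≤ i ≤ n, where χ_i(t) = Σ_{j=0}^i (-1)^{i-j} t_j. -/
open Module

lemma chi_succ' (t : ℕ → ℤ) (i : ℕ) :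
    ∑ j ∈ Finset.range (i + 1 + 1), (-1 : ℤ) ^ (i + 1 - j) * t j
      = t (i + 1) - ∑ j ∈ Finset.range (i + 1), (-1 : ℤ) ^ (i - j) * t j := by
  rw [Finset.sum_range_succ]
  have hc : ∀ j ∈ Finset.range (i + 1),
      (-1 : ℤ) ^ (i + 1 - j) * t j = -((-1) ^ (i - j) * t j) := by
    intro j hj
    rw [Finset.mem_range] at hj
    have : i + 1 - j = (i - j) + 1 := by omega
    rw [this, pow_succ]; ring
  rw [Finset.sum_congr rfl hc, Finset.sum_neg_distrib]
  simp; ring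

lemma aux_finrank_map_add_inf_ker {V V₂ : Type} [AddCommGroup V] [Module ℂ V]
    [FiniteDimensional ℂ V] [AddCommGroup V₂] [Module ℂ V₂]
    (f : V →ₗ[ℂ] V₂) (p : Submodule ℂ V) :
    finrank ℂ (p.map f) + finrank ℂ (LinearMap.ker f ⊓ p : Submodule ℂ V) = finrank ℂ p := by
  have h := (f.domRestrict p).finrank_range_add_finrank_ker
  rw [LinearMap.range_domRestrict, LinearMap.ker_domRestrict] at h
  rw [← h]
  congr 1
  have he : (LinearMap.ker f).comap p.subtype = (LinearMap.ker f ⊓ p).comap p.subtype := by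
    rw [Submodule.comap_inf, Submodule.comap_subtype_self, inf_top_eq]
  rw [he]
  exact (LinearEquiv.finrank_eq (Submodule.comapSubtypeEquivOfLe
    (inf_le_right : LinearMap.ker f ⊓ p ≤ p))).symm

lemma aux_exists_between {V : Type} [AddCommGroup V] [Module ℂ V] [FiniteDimensional ℂ V]
    (B q : Submodule ℂ V) (hBq : B ≤ q) {d : ℕ}
    (h1 : finrank ℂ B ≤ d) (h2 : d ≤ finrank ℂ q) :
    ∃ K : Submodule ℂ V, B ≤ K ∧ K ≤ q ∧ finrank ℂ K = d := by
  induction d, h1 using Nat.le_induction with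
  | base => exact ⟨B, le_rfl, hBq, rfl⟩
  | succ d hd ih =>
    obtain ⟨K, hBK, hKq, hK⟩ := ih (by omega)
    have hne : K ≠ q := by
      intro e; rw [e] at hK; omega
    obtain ⟨x, hxq, hxK⟩ : ∃ x ∈ q, x ∉ K := by
      by_contra hc
      push_neg at hc
      exact hne (le_antisymm hKq hc)
    have hx0 : x ≠ 0 := fun e => hxK (e ▸ K.zero_mem)
    refine ⟨K ⊔ (ℂ ∙ x), le_trans hBK le_sup_left,
      sup_le hKq ((Submodule.span_singleton_le_iff_mem x q).2 hxq), ?_⟩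
    have hdisj : K ⊓ (ℂ ∙ x) = ⊥ :=
      ((Submodule.disjoint_span_singleton' hx0).mpr hxK).eq_bot
    have := Submodule.finrank_sup_add_finrank_inf_eq K (ℂ ∙ x)
    rw [hdisj, finrank_bot, finrank_span_singleton hx0] at this
    omega

lemma aux_step {V V₂ : Type} [AddCommGroup V] [Module ℂ V] [FiniteDimensional ℂ V]
    [AddCommGroup V₂] [Module ℂ V₂] [FiniteDimensional ℂ V₂]
    (f : V →ₗ[ℂ] V₂) (B : Submodule ℂ V) (hB : B ≤ LinearMap.ker f)
    (a c : ℕ) (ha : finrank ℂ B ≤ a) (hak : a ≤ finrank ℂ (LinearMap.ker f))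
    (hc : c ≤ finrank ℂ (LinearMap.range f)) :
    ∃ L : Submodule ℂ V, B ≤ L ∧ finrank ℂ L = a + c ∧
      finrank ℂ (LinearMap.ker f ⊓ L : Submodule ℂ V) = a ∧
      finrank ℂ (L.map f) = c := by
  obtain ⟨K, hBK, hKker, hKrank⟩ := aux_exists_between B (LinearMap.ker f) hB ha hak
  obtain ⟨q, hq⟩ := (LinearMap.ker f).exists_isCompl
  have hqrank : finrank ℂ q = finrank ℂ (LinearMap.range f) := by
    have h1 := Submodule.finrank_add_eq_of_isCompl hq
    have h2 := f.finrank_range_add_finrank_ker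
    omega
  obtain ⟨C, _, hCq, hCrank⟩ := aux_exists_between ⊥ q bot_le (d := c)
    (by simp) (by omega)
  have hCker : LinearMap.ker f ⊓ C = ⊥ := by
    rw [eq_bot_iff]
    exact le_trans (inf_le_inf_left _ hCq) (le_of_eq hq.inf_eq_bot)
  have hKC : K ⊓ C = ⊥ := by
    rw [eq_bot_iff, ← hCker]
    exact inf_le_inf_right _ hKker
  refine ⟨K ⊔ C, le_trans hBK le_sup_left, ?_, ?_, ?_⟩
  · have h5 := Submodule.finrank_sup_add_finrank_inf_eq K C
    rw [hKC, finrank_bot, hKrank, hCrank] at h5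
    omega
  · rw [inf_comm, sup_inf_assoc_of_le _ hKker, inf_comm, hCker, sup_bot_eq, hKrank]
  · have hmK : K.map f = ⊥ := by
      rw [← LinearMap.le_ker_iff_map]; exact hKker
    rw [Submodule.map_sup, hmK, bot_sup_eq]
    have := aux_finrank_map_add_inf_ker f C
    rw [hCker, finrank_bot] at this
    omega

/-- Proposition 8: existence of a subcomplex `L ⊆ W` with `dim L = r` and `dim H(L) = s`
if and only if `0 ≤ χ_i(r - s) ≤ χ_i(w - h)` for all `0 ≤ i ≤ n`. -/
theorem subcomplex_exists_iff (n : ℕ) (W : ℕ → Type)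
    [∀ i, AddCommGroup (W i)] [∀ i, Module ℂ (W i)] [∀ i, FiniteDimensional ℂ (W i)]
    (hW : ∀ i, n < i → Subsingleton (W i))
    (δ : ∀ i, W i →ₗ[ℂ] W (i + 1))
    (hδ : ∀ i, (δ (i + 1)).comp (δ i) = 0)
    (h : ℕ → ℕ)
    (hh0 : h 0 = finrank ℂ (LinearMap.ker (δ 0)))
    (hhs : ∀ i, h (i + 1) + finrank ℂ (LinearMap.range (δ i)) =
      finrank ℂ (LinearMap.ker (δ (i + 1))))
    (r s : ℕ → ℕ)
    (hsr : ∀ i, s i ≤ r i) (hrw : ∀ i, r i ≤ finrank ℂ (W i)) (hsh : ∀ i, s i ≤ h i)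
    (hrtail : ∀ i, n < i → r i = 0) (hstail : ∀ i, n < i → s i = 0) :
    (∃ L : ∀ i, Submodule ℂ (W i),
        (∀ i, (L i).map (δ i) ≤ L (i + 1)) ∧
        (∀ i, finrank ℂ (L i) = r i) ∧
        finrank ℂ (LinearMap.ker (δ 0) ⊓ L 0 : Submodule ℂ (W 0)) = s 0 ∧
        (∀ i, s (i + 1) + finrank ℂ ((L i).map (δ i)) =
          finrank ℂ (LinearMap.ker (δ (i + 1)) ⊓ L (i + 1) : Submodule ℂ (W (i + 1))))) ↔
      ∀ i ≤ n,
        0 ≤ ∑ j ∈ Finset.range (i + 1), (-1) ^ (i - j) * ((r j : ℤ) - (s j : ℤ)) ∧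
        ∑ j ∈ Finset.range (i + 1), (-1) ^ (i - j) * ((r j : ℤ) - (s j : ℤ)) ≤
          ∑ j ∈ Finset.range (i + 1), (-1) ^ (i - j) * ((finrank ℂ (W j) : ℤ) - (h j : ℤ)) := by
  -- Lemma A : the partial Euler characteristic of `w - h` equals the rank of `δ i`.
  have hA : ∀ i, (∑ j ∈ Finset.range (i + 1),
        (-1 : ℤ) ^ (i - j) * ((finrank ℂ (W j) : ℤ) - (h j : ℤ)))
      = (finrank ℂ (LinearMap.range (δ i)) : ℤ) := by
    intro i
    induction i with
    | zero =>
      have h1 : finrank ℂ (LinearMap.range (δ 0)) + finrank ℂ (LinearMap.ker (δ 0))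
          = finrank ℂ (W 0) := (δ 0).finrank_range_add_finrank_ker
      simp only [Finset.sum_range_succ, Finset.sum_range_zero, Nat.sub_self, pow_zero, one_mul]
      rw [hh0]; push_cast at h1 ⊢; omega
    | succ i ih =>
      rw [chi_succ' (fun j => ((finrank ℂ (W j) : ℤ) - (h j : ℤ))) i, ih]
      have h1 : finrank ℂ (LinearMap.range (δ (i + 1))) + finrank ℂ (LinearMap.ker (δ (i + 1)))
          = finrank ℂ (W (i + 1)) := (δ (i + 1)).finrank_range_add_finrank_ker
      have h2 := hhs i
      push_cast; omega
  constructor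
  · rintro ⟨L, hLmap, hLr, hk0, hks⟩ i _
    have key : ∀ i, (∑ j ∈ Finset.range (i + 1),
          (-1 : ℤ) ^ (i - j) * ((r j : ℤ) - (s j : ℤ)))
        = (finrank ℂ ((L i).map (δ i)) : ℤ) := by
      intro i
      induction i with
      | zero =>
        have h1 : finrank ℂ ((L 0).map (δ 0))
            + finrank ℂ (LinearMap.ker (δ 0) ⊓ L 0 : Submodule ℂ (W 0))
            = finrank ℂ (L 0) := aux_finrank_map_add_inf_ker (δ 0) (L 0)
        rw [hk0, hLr 0] at h1
        simp only [Finset.sum_range_succ, Finset.sum_range_zero, Nat.sub_self, pow_zero,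
          one_mul]
        push_cast at h1 ⊢; omega
      | succ i ih =>
        rw [chi_succ' (fun j => ((r j : ℤ) - (s j : ℤ))) i, ih]
        have h1 : finrank ℂ ((L (i + 1)).map (δ (i + 1)))
            + finrank ℂ (LinearMap.ker (δ (i + 1)) ⊓ L (i + 1) : Submodule ℂ (W (i + 1)))
            = finrank ℂ (L (i + 1)) := aux_finrank_map_add_inf_ker (δ (i + 1)) (L (i + 1))
        rw [hLr (i + 1)] at h1
        have h2 := hks i
        push_cast; omega
    refine ⟨by rw [key i]; positivity, ?_⟩
    rw [key i, hA i]
    exact_mod_cast Submodule.finrank_mono LinearMap.map_le_range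
  · intro hyp
    have hRn : ∀ i, n ≤ i → finrank ℂ (LinearMap.range (δ i)) = 0 := by
      intro i hi
      have : Subsingleton (W (i + 1)) := hW (i + 1) (by omega)
      have h1 : finrank ℂ (W (i + 1)) = 0 := Module.finrank_zero_of_subsingleton
      have h2 := Submodule.finrank_le (LinearMap.range (δ i))
      omega
    have hχtail : ∀ i, n ≤ i →
        (∑ j ∈ Finset.range (i + 1), (-1 : ℤ) ^ (i - j) * ((r j : ℤ) - (s j : ℤ))) = 0 := by
      intro i hi
      induction i, hi using Nat.le_induction with
      | base =>
        have h1 := (hyp n le_rfl).1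
        have h2 := (hyp n le_rfl).2
        rw [hA n, hRn n le_rfl] at h2
        omega
      | succ i hi ih =>
        rw [chi_succ' (fun j => ((r j : ℤ) - (s j : ℤ))) i, ih,
          hrtail (i + 1) (by omega), hstail (i + 1) (by omega)]
        simp
    have hχnonneg : ∀ i,
        0 ≤ ∑ j ∈ Finset.range (i + 1), (-1 : ℤ) ^ (i - j) * ((r j : ℤ) - (s j : ℤ)) := by
      intro i
      rcases le_or_gt i n with hi | hi
      · exact (hyp i hi).1
      · rw [hχtail i (by omega)]
    have hχleR : ∀ i,
        (∑ j ∈ Finset.range (i + 1), (-1 : ℤ) ^ (i - j) * ((r j : ℤ) - (s j : ℤ)))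
          ≤ (finrank ℂ (LinearMap.range (δ i)) : ℤ) := by
      intro i
      rcases le_or_gt i n with hi | hi
      · have := (hyp i hi).2
        rwa [hA i] at this
      · rw [hχtail i (by omega)]
        positivity
    -- the natural numbers ρ i = χ_i(r - s)
    obtain ⟨ρ, hρ⟩ : ∃ ρ : ℕ → ℕ, ∀ i, (ρ i : ℤ)
        = ∑ j ∈ Finset.range (i + 1), (-1 : ℤ) ^ (i - j) * ((r j : ℤ) - (s j : ℤ)) :=
      ⟨fun i => (∑ j ∈ Finset.range (i + 1),
          (-1 : ℤ) ^ (i - j) * ((r j : ℤ) - (s j : ℤ))).toNat,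
        fun i => Int.toNat_of_nonneg (hχnonneg i)⟩
    have hρR : ∀ i, ρ i ≤ finrank ℂ (LinearMap.range (δ i)) := by
      intro i
      have h1 := hχleR i
      rw [← hρ i] at h1
      exact_mod_cast h1
    have hρ0 : r 0 = ρ 0 + s 0 := by
      have h1 := hρ 0
      simp only [Finset.sum_range_succ, Finset.sum_range_zero, Nat.sub_self, pow_zero,
        one_mul] at h1
      omega
    have hρS : ∀ i, r (i + 1) = ρ (i + 1) + (s (i + 1) + ρ i) := by
      intro i
      have h1 := hρ (i + 1)
      rw [chi_succ' (fun j => ((r j : ℤ) - (s j : ℤ))) i, ← hρ i] at h1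
      omega
    -- the target dimensions for the kernels, and the dimension of the incoming boundaries
    obtain ⟨a, ha0, haS⟩ : ∃ a : ℕ → ℕ, a 0 = s 0 ∧ ∀ j, a (j + 1) = s (j + 1) + ρ j :=
      ⟨fun i => Nat.casesOn i (s 0) (fun j => s (j + 1) + ρ j), rfl, fun j => rfl⟩
    obtain ⟨pre, hpre0, hpreS⟩ : ∃ p : ℕ → ℕ, p 0 = 0 ∧ ∀ j, p (j + 1) = ρ j :=
      ⟨fun i => Nat.casesOn i 0 (fun j => ρ j), rfl, fun j => rfl⟩
    have hpre_le_a : ∀ i, pre i ≤ a i := by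
      intro i; cases i with
      | zero => rw [hpre0]; exact Nat.zero_le _
      | succ j => rw [hpreS, haS]; exact Nat.le_add_left _ _
    have ha_le_K : ∀ i, a i ≤ finrank ℂ (LinearMap.ker (δ i)) := by
      intro i; cases i with
      | zero => have := hsh 0; omega
      | succ j =>
        have h1 := hsh (j + 1)
        have h2 := hρR j
        have h3 := hhs j
        rw [haS]
        omega
    have har : ∀ i, a i + ρ i = r i := by
      intro i; cases i with
      | zero => rw [ha0]; omega
      | succ j => have := hρS j; rw [haS]; omega
    have hstep : ∀ i (B : Submodule ℂ (W i)), B ≤ LinearMap.ker (δ i) →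
        finrank ℂ B = pre i →
        ∃ L : Submodule ℂ (W i), B ≤ L ∧ finrank ℂ L = r i ∧
          finrank ℂ (LinearMap.ker (δ i) ⊓ L : Submodule ℂ (W i)) = a i ∧
          finrank ℂ (L.map (δ i)) = ρ i := by
      intro i B hB hBr
      obtain ⟨L, h1, h2, h3, h4⟩ := aux_step (δ i) B hB (a i) (ρ i)
        (by rw [hBr]; exact hpre_le_a i) (ha_le_K i) (hρR i)
      exact ⟨L, h1, by rw [h2, har i], h3, h4⟩
    choose! F hF1 hF2 hF3 hF4 using hstep
    have hmapker : ∀ i (p : Submodule ℂ (W i)),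
        p.map (δ i) ≤ LinearMap.ker (δ (i + 1)) := by
      intro i p x hx
      obtain ⟨y, _, rfl⟩ := hx
      have := LinearMap.ext_iff.mp (hδ i) y
      simpa [LinearMap.mem_ker] using this
    obtain ⟨LL, hLL0, hLLS⟩ : ∃ LL : ∀ i, Submodule ℂ (W i),
        LL 0 = F 0 ⊥ ∧ ∀ i, LL (i + 1) = F (i + 1) ((LL i).map (δ i)) :=
      ⟨fun i => Nat.rec (F 0 ⊥) (fun i Li => F (i + 1) (Li.map (δ i))) i, rfl, fun i => rfl⟩
    have hval : ∀ i, ∃ B, LL i = F i B ∧ B ≤ LinearMap.ker (δ i) ∧ finrank ℂ B = pre i := by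
      intro i
      induction i with
      | zero => exact ⟨⊥, hLL0, bot_le, by simp [hpre0]⟩
      | succ i ih =>
        obtain ⟨B, hLB, h1, h2⟩ := ih
        refine ⟨(LL i).map (δ i), hLLS i, hmapker i _, ?_⟩
        rw [hpreS, hLB]
        exact hF4 i B h1 h2
    have hprops : ∀ i, finrank ℂ (LL i) = r i ∧
        finrank ℂ (LinearMap.ker (δ i) ⊓ LL i : Submodule ℂ (W i)) = a i ∧
        finrank ℂ ((LL i).map (δ i)) = ρ i := by
      intro i
      obtain ⟨B, hLB, h1, h2⟩ := hval i
      rw [hLB]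
      exact ⟨hF2 i B h1 h2, hF3 i B h1 h2, hF4 i B h1 h2⟩
    have hlink : ∀ i, (LL i).map (δ i) ≤ LL (i + 1) := by
      intro i
      rw [hLLS i]
      exact hF1 (i + 1) ((LL i).map (δ i)) (hmapker i _) (by rw [hpreS]; exact (hprops i).2.2)
    refine ⟨LL, hlink, fun i => (hprops i).1, by rw [(hprops 0).2.1, ha0], fun i => ?_⟩
    rw [(hprops (i + 1)).2.1, (hprops i).2.2, haS]
end

section
/- Let V = ⊕_{i=0}^n V^i be a graded finite-dimensional vector space with v_i = dim V^i, and let r ∈ ℕ^{n+1} with r_i ≤ v_{i+1} for all i (where v_{n+1} = 0 forces r_n = 0). Then there exists a family of linear maps d^i : V^i → V^{i+1} with d^{i+1} d^i = 0 and rk(d^i) = r_i for all i, if and only if r_i + r_{i-1} ≤ v_i for all i (with r_{-1} = 0). Moreover for any such d, dim H^i(V,d) = v_i - r_i - r_{i-1}. -/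
open Module LinearMap

/-- There exists a linear map of any rank `r ≤ min (dim W₁) (dim W₂)`. -/
lemma exists_linearMap_rank_eq (W₁ W₂ : Type) [AddCommGroup W₁] [Module ℂ W₁]
    [FiniteDimensional ℂ W₁] [AddCommGroup W₂] [Module ℂ W₂] [FiniteDimensional ℂ W₂]
    (r : ℕ) (h1 : r ≤ finrank ℂ W₁) (h2 : r ≤ finrank ℂ W₂) :
    ∃ f : W₁ →ₗ[ℂ] W₂, finrank ℂ (LinearMap.range f) = r := by
  classical
  let b1 := Module.finBasis ℂ W₁
  let b2 := Module.finBasis ℂ W₂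
  let g : Fin (finrank ℂ W₁) → W₂ := fun j =>
    if h : (j : ℕ) < r then b2 ⟨j, lt_of_lt_of_le h h2⟩ else 0
  refine ⟨b1.constr ℂ g, ?_⟩
  have hv : LinearIndependent ℂ (fun k : Fin r => b2 (Fin.castLE h2 k)) :=
    b2.linearIndependent.comp _ (Fin.castLE_injective h2)
  have hspan : LinearMap.range (b1.constr ℂ g) =
      Submodule.span ℂ (Set.range fun k : Fin r => b2 (Fin.castLE h2 k)) := by
    rw [Basis.constr_range]
    apply le_antisymm
    · rw [Submodule.span_le]
      rintro x ⟨j, rfl⟩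
      by_cases h : (j : ℕ) < r
      · simp only [g, dif_pos h]
        exact Submodule.subset_span ⟨⟨j, h⟩, rfl⟩
      · simp only [g, dif_neg h]
        exact Submodule.zero_mem _
    · rw [Submodule.span_le]
      rintro x ⟨k, rfl⟩
      apply Submodule.subset_span
      refine ⟨⟨k, lt_of_lt_of_le k.2 h1⟩, ?_⟩
      simp only [g, dif_pos (show ((⟨(k : ℕ), lt_of_lt_of_le k.2 h1⟩ : Fin _) : ℕ) < r from k.2)]
      rfl
  rw [hspan, finrank_span_eq_card hv, Fintype.card_fin]

/-- There is a linear map of rank `r` vanishing on `S`, provided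
`r + dim S ≤ dim W₁` and `r ≤ dim W₂`. -/
lemma exists_linearMap_rank_eq_of_le_ker (W₁ W₂ : Type) [AddCommGroup W₁] [Module ℂ W₁]
    [FiniteDimensional ℂ W₁] [AddCommGroup W₂] [Module ℂ W₂] [FiniteDimensional ℂ W₂]
    (S : Submodule ℂ W₁) (r : ℕ) (h1 : r + finrank ℂ S ≤ finrank ℂ W₁)
    (h2 : r ≤ finrank ℂ W₂) :
    ∃ f : W₁ →ₗ[ℂ] W₂, S ≤ LinearMap.ker f ∧ finrank ℂ (LinearMap.range f) = r := by
  obtain ⟨C, hC⟩ := S.exists_isCompl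
  have hdim : finrank ℂ S + finrank ℂ C = finrank ℂ W₁ :=
    Submodule.finrank_add_eq_of_isCompl hC
  have hrC : r ≤ finrank ℂ C := by omega
  obtain ⟨g, hg⟩ := exists_linearMap_rank_eq C W₂ r hrC h2
  let π : W₁ →ₗ[ℂ] C := C.projectionOnto S hC.symm
  refine ⟨g.comp π, ?_, ?_⟩
  · intro x hx
    simp only [LinearMap.mem_ker, LinearMap.comp_apply]
    rw [Submodule.projectionOnto_apply_of_mem_right hC.symm hx, map_zero]
  · rw [LinearMap.range_comp, Submodule.range_projectionOnto, Submodule.map_top]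
    exact hg

variable (V : ℕ → Type) [∀ i, AddCommGroup (V i)] [∀ i, Module ℂ (V i)]
  [∀ i, FiniteDimensional ℂ (V i)] (r : ℕ → ℕ)

noncomputable def diffChain (h0 : r 0 ≤ finrank ℂ (V 0))
    (hr : ∀ i, r i ≤ finrank ℂ (V (i + 1)))
    (hs : ∀ i, r (i + 1) + r i ≤ finrank ℂ (V (i + 1))) :
    ∀ i, {f : V i →ₗ[ℂ] V (i + 1) // finrank ℂ (LinearMap.range f) = r i}
  | 0 => ⟨Classical.choose (exists_linearMap_rank_eq (V 0) (V 1) (r 0) h0 (hr 0)),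
      Classical.choose_spec (exists_linearMap_rank_eq (V 0) (V 1) (r 0) h0 (hr 0))⟩
  | (i + 1) =>
      have prev := diffChain h0 hr hs i
      have hkey := exists_linearMap_rank_eq_of_le_ker (V (i + 1)) (V (i + 2))
        (LinearMap.range prev.1) (r (i + 1)) (by rw [prev.2]; exact hs i) (hr (i + 1))
      ⟨Classical.choose hkey, (Classical.choose_spec hkey).2⟩

lemma diffChain_comp (h0 : r 0 ≤ finrank ℂ (V 0))
    (hr : ∀ i, r i ≤ finrank ℂ (V (i + 1)))
    (hs : ∀ i, r (i + 1) + r i ≤ finrank ℂ (V (i + 1))) (i : ℕ) :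
    ((diffChain V r h0 hr hs (i + 1)).1).comp (diffChain V r h0 hr hs i).1 = 0 := by
  rw [← LinearMap.range_le_ker_iff]
  conv_rhs => rw [diffChain]
  exact (Classical.choose_spec (exists_linearMap_rank_eq_of_le_ker (V (i + 1)) (V (i + 2))
    (LinearMap.range (diffChain V r h0 hr hs i).1) (r (i + 1))
    (by rw [(diffChain V r h0 hr hs i).2]; exact hs i) (hr (i + 1)))).1


open Module

/-- Proposition 20: on a graded finite-dimensional space `V` in degrees `0..n` with
`r_i ≤ v_{i+1}`, a differential `d` with `d∘d = 0` and `rk(d^i) = r_i` exists iff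
`r_i + r_{i-1} ≤ v_i` for all `i`; moreover any such `d` satisfies
`dim H^i(V,d) = v_i - r_i - r_{i-1}`. -/
theorem differential_of_rank_exists_iff (n : ℕ) (V : ℕ → Type)
    [∀ i, AddCommGroup (V i)] [∀ i, Module ℂ (V i)] [∀ i, FiniteDimensional ℂ (V i)]
    (hV : ∀ i, n < i → Subsingleton (V i))
    (r : ℕ → ℕ)
    (hr : ∀ i, r i ≤ finrank ℂ (V (i + 1))) :
    ((∃ d : ∀ i, V i →ₗ[ℂ] V (i + 1),
        (∀ i, (d (i + 1)).comp (d i) = 0) ∧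
        (∀ i, finrank ℂ (LinearMap.range (d i)) = r i)) ↔
      (r 0 ≤ finrank ℂ (V 0) ∧ ∀ i, r (i + 1) + r i ≤ finrank ℂ (V (i + 1)))) ∧
    ∀ d : ∀ i, V i →ₗ[ℂ] V (i + 1),
      (∀ i, (d (i + 1)).comp (d i) = 0) →
      (∀ i, finrank ℂ (LinearMap.range (d i)) = r i) →
      ((finrank ℂ (LinearMap.ker (d 0)) : ℤ) = (finrank ℂ (V 0) : ℤ) - (r 0 : ℤ) ∧
        ∀ i, (finrank ℂ (LinearMap.ker (d (i + 1))) : ℤ) -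
            (finrank ℂ (LinearMap.range (d i)) : ℤ) =
          (finrank ℂ (V (i + 1)) : ℤ) - (r (i + 1) : ℤ) - (r i : ℤ)) := by
  constructor
  · constructor
    · rintro ⟨d, hcomp, hrank⟩
      constructor
      · rw [← hrank 0]
        exact (d 0).finrank_range_le
      · intro i
        have h1 : LinearMap.range (d i) ≤ LinearMap.ker (d (i + 1)) :=
          LinearMap.range_le_ker_iff.mpr (hcomp i)
        have h2 := Submodule.finrank_mono h1
        have h3 := LinearMap.finrank_range_add_finrank_ker (d (i + 1))
        rw [hrank i] at h2
        rw [hrank (i + 1)] at h3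
        omega
    · rintro ⟨h0, hs⟩
      exact ⟨fun i => (diffChain V r h0 hr hs i).1, diffChain_comp V r h0 hr hs,
        fun i => (diffChain V r h0 hr hs i).2⟩
  · intro d hcomp hrank
    constructor
    · have h3 := LinearMap.finrank_range_add_finrank_ker (d 0)
      rw [hrank 0] at h3
      omega
    · intro i
      have h3 := LinearMap.finrank_range_add_finrank_ker (d (i + 1))
      rw [hrank (i + 1)] at h3
      rw [hrank i]
      omega
end
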